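/- Greedy farthest-first selection is a 2-approximation for the k-center problem: if C_K is the set of K centers produced by farthest-first traversal on a finite set Z (starting from any point of Z), then the covering radius of C_K is at most twice the optimal K-center covering radius: max_{z∈Z} min_{c∈C_K} d(z,c) ≤ 2 · min_{C⊆Z, |C|=K} max_{z∈Z} min_{c∈C} d(z,c). -/
import Mathlib


/-- Farthest-first traversal is a 2-approximation for the k-center problem. -/
theorem farthest_first_two_approx {X : Type*} [MetricSpace X]
    (Z : Finset X) (K : ℕ) (hK : 1 ≤ K) (hKZ : K ≤ Z.card)
    (c : ℕ → X) (hc0 : c 0 ∈ Z)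
    (hgreedy : ∀ ℓ : ℕ, c (ℓ + 1) ∈ Z ∧
      ∀ z ∈ Z,
        (Finset.range (ℓ + 1)).inf' (by simp) (fun i => dist z (c i)) ≤
          (Finset.range (ℓ + 1)).inf' (by simp) (fun i => dist (c (ℓ + 1)) (c i)))
    (hZ : Z.Nonempty) :
    ∀ C : Finset X, C ⊆ Z → C.card = K →
      ∀ hC : C.Nonempty,
        Z.sup' hZ (fun z => (Finset.range K).inf' (Finset.nonempty_range_iff.mpr (by omega)) (fun i => dist z (c i))) ≤
          2 * Z.sup' hZ (fun z => C.inf' hC (fun m => dist z m)) := by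
  intro C hCZ hCcard hC
  set R := Z.sup' hZ (fun z => C.inf' hC (fun m => dist z m)) with hRdef
  have hmem : ∀ k, c k ∈ Z := by
    intro k
    cases k with
    | zero => exact hc0
    | succ n => exact (hgreedy n).1
  have hnear : ∀ k : ℕ, C.inf' hC (fun m => dist (c k) m) ≤ R :=
    fun k => Finset.le_sup' (fun z => C.inf' hC (fun m => dist z m)) (hmem k)
  obtain ⟨z0, hz0, hz0eq⟩ := Finset.exists_mem_eq_sup' hZ
    (fun z => (Finset.range K).inf' (Finset.nonempty_range_iff.mpr (by omega)) (fun i => dist z (c i)))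
  rw [hz0eq]
  set r := (Finset.range K).inf' (Finset.nonempty_range_iff.mpr (by omega : K ≠ 0)) (fun i => dist z0 (c i)) with hrdef
  -- pairwise lower bound
  have hpair : ∀ j k : ℕ, j < k → k ≤ K → r ≤ dist (c k) (c j) := by
    intro j k hjk hkK
    obtain ⟨ℓ, rfl⟩ : ∃ ℓ, k = ℓ + 1 := ⟨k - 1, by omega⟩
    have h1 : r ≤ (Finset.range (ℓ + 1)).inf' (by simp) (fun i => dist z0 (c i)) := by
      rw [hrdef]
      exact Finset.inf'_mono _ (Finset.range_subset_range.mpr hkK) (by simp)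
    have h2 := (hgreedy ℓ).2 z0 hz0
    have h3 : (Finset.range (ℓ + 1)).inf' (by simp) (fun i => dist (c (ℓ + 1)) (c i)) ≤
        dist (c (ℓ + 1)) (c j) :=
      Finset.inf'_le _ (Finset.mem_range.mpr hjk)
    linarith
  -- pigeonhole
  choose g hg1 hg2 using fun k : ℕ => Finset.exists_mem_eq_inf' hC (fun m => dist (c k) m)
  have hcard : C.card < (Finset.range (K + 1)).card := by simp [hCcard]
  obtain ⟨i, hi, j, hj, hij, heq⟩ :=
    Finset.exists_ne_map_eq_of_card_lt_of_maps_to hcard (fun k _ => hg1 k)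
  rw [Finset.mem_range] at hi hj
  wlog hlt : i < j generalizing i j
  · exact this j hj i hi (Ne.symm hij) heq.symm (by omega)
  have h1 : r ≤ dist (c j) (c i) := hpair i j hlt (by omega)
  have h2 : dist (c j) (g j) ≤ R := (hg2 j) ▸ hnear j
  have h3 : dist (c i) (g i) ≤ R := (hg2 i) ▸ hnear i
  have htri : dist (c j) (c i) ≤ dist (c j) (g j) + dist (c i) (g i) := by
    rw [← heq]
    calc dist (c j) (c i) ≤ dist (c j) (g i) + dist (g i) (c i) := dist_triangle _ _ _
    _ = dist (c j) (g i) + dist (c i) (g i) := by rw [dist_comm (g i)]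
  linarith
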